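/- Let d ≥ 7 be odd and C the plane curve X^d + X^{d-2}Y² + X^{(d-1)/2}YZ^{(d-1)/2} + aXY^{d-1} + bXZ^{d-1} + cY^{(d+1)/2}Z^{(d-1)/2} = 0 (when d ≡ 1 mod 4). Then every diagonal projective automorphism diag(1, λ, μ) of C satisfies λ² = λμ^{(d-1)/2} = λ^{d-1} = μ^{d-1} = 1, hence the group of diagonal automorphisms is cyclic of order d-1 generated by [X : -Y : ζ_{d-1}Z]. -/
import Mathlib

open Polynomial in
lemma aux_three_coeffs {k : Type*} [Field k] [Infinite k] (u v w : k) (n m : ℕ)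
    (hn : 0 < n) (hnm : n < m)
    (h : ∀ y : k, u + v * y ^ n + w * y ^ m = 0) :
    u = 0 ∧ v = 0 ∧ w = 0 := by
  have hp : (C u + C v * X ^ n + C w * X ^ m : k[X]) = 0 := by
    apply Polynomial.funext
    intro y
    simpa using h y
  have h0 := congrArg (fun p : k[X] => p.coeff 0) hp
  have h1 := congrArg (fun p : k[X] => p.coeff n) hp
  have h2 := congrArg (fun p : k[X] => p.coeff m) hp
  have e1 : n ≠ 0 := hn.ne'
  have e2 : m ≠ 0 := by omega
  have e3 : m ≠ n := by omega
  simp [coeff_C, coeff_X_pow, e1, e2, e3, Ne.symm e1, Ne.symm e2, Ne.symm e3] at h0 h1 h2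
  exact ⟨h0, h1, h2⟩

/-- For odd `d ≥ 7` with `d ≡ 1 mod 4` and the plane curve
`X^d + X^{d-2}Y² + X^{(d-1)/2}YZ^{(d-1)/2} + aXY^{d-1} + bXZ^{d-1} + cY^{(d+1)/2}Z^{(d-1)/2} = 0`
(with `ab ≠ 0`), every diagonal projective automorphism `diag(1, λ, μ)` satisfies
`λ² = λμ^{(d-1)/2} = λ^{d-1} = μ^{d-1} = 1`; hence the diagonal automorphisms form the cyclic
group of order `d-1` generated by `[X : -Y : ζ_{d-1}Z]`, i.e. `(λ, μ) = ((-1)^r, ζ^r)`. -/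
theorem diagonal_automorphisms_cyclic {k : Type*} [Field k] [IsAlgClosed k]
    (d : ℕ) (hd : 7 ≤ d) (hd4 : d % 4 = 1)
    (hchar : ∀ p : ℕ, CharP k p → p = 0 ∨ (d - 1) * (d - 2) + 1 < p)
    (a b c ζ : k) (hab : a * b ≠ 0) (hζ : IsPrimitiveRoot ζ (d - 1))
    (lam mu : k)
    (hauto : ∃ e : k, e ≠ 0 ∧ ∀ x y z : k,
      x ^ d + x ^ (d - 2) * (lam * y) ^ 2 +
        x ^ ((d - 1) / 2) * (lam * y) * (mu * z) ^ ((d - 1) / 2) +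
        a * x * (lam * y) ^ (d - 1) + b * x * (mu * z) ^ (d - 1) +
        c * (lam * y) ^ ((d + 1) / 2) * (mu * z) ^ ((d - 1) / 2) =
      e * (x ^ d + x ^ (d - 2) * y ^ 2 + x ^ ((d - 1) / 2) * y * z ^ ((d - 1) / 2) +
        a * x * y ^ (d - 1) + b * x * z ^ (d - 1) +
        c * y ^ ((d + 1) / 2) * z ^ ((d - 1) / 2))) :
    (lam ^ 2 = 1 ∧ lam * mu ^ ((d - 1) / 2) = 1 ∧ lam ^ (d - 1) = 1 ∧ mu ^ (d - 1) = 1) ∧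
    ∃ r : ℕ, lam = (-1 : k) ^ r ∧ mu = ζ ^ r := by
  obtain ⟨t, rfl⟩ : ∃ t, d = 4 * t + 1 := ⟨d / 4, by omega⟩
  have ht2 : 2 ≤ t := by omega
  have e1 : 4 * t + 1 - 1 = 4 * t := by omega
  have e2 : 4 * t + 1 - 2 = 4 * t - 1 := by omega
  have e3 : (4 * t) / 2 = 2 * t := by omega
  have e4 : (4 * t + 1 + 1) / 2 = 2 * t + 1 := by omega
  rw [e1] at hζ
  simp only [e1, e2, e3, e4] at hauto ⊢
  obtain ⟨e, he, hF⟩ := hauto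
  have ha : a ≠ 0 := fun h => hab (by simp [h])
  have hb : b ≠ 0 := fun h => hab (by simp [h])
  have h2t : (2 * t : ℕ) ≠ 0 := by omega
  have h4t : (4 * t : ℕ) ≠ 0 := by omega
  -- Step 1: z = 0
  have step1 : (1 - e) = 0 ∧ (lam ^ 2 - e) = 0 ∧ (a * lam ^ (4 * t) - e * a) = 0 := by
    apply aux_three_coeffs _ _ _ 2 (4 * t) (by omega) (by omega)
    intro y
    have := hF 1 y 0
    simp only [mul_zero, zero_pow h2t, zero_pow h4t, one_pow, mul_pow] at this
    linear_combination this
  obtain ⟨hu1, hv1, hw1⟩ := step1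
  have he1 : e = 1 := by linear_combination -hu1
  subst he1
  have hlam2 : lam ^ 2 = 1 := by linear_combination hv1
  have hlam4t : lam ^ (4 * t) = 1 := by
    have h := mul_left_cancel₀ ha (show a * lam ^ (4 * t) = a * 1 by linear_combination hw1)
    simpa using h
  -- Step 2: y = 0
  have step2 : mu ^ (4 * t) = 1 := by
    have s2 : (1 - (1:k)) = 0 ∧ (b * mu ^ (4 * t) - b) = 0 ∧ (0 : k) = 0 := by
      apply aux_three_coeffs _ _ _ (4 * t) (4 * t + 1) (by omega) (by omega)
      intro z
      have := hF 1 0 z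
      simp only [mul_zero, zero_pow h2t, zero_pow h4t, one_pow, mul_pow,
        zero_pow (by omega : (2 * t + 1 : ℕ) ≠ 0)] at this
      linear_combination this
    have h := mul_left_cancel₀ hb (show b * mu ^ (4 * t) = b * 1 by linear_combination s2.2.1)
    simpa using h
  -- Step 3: z = 1
  have step3 : lam * mu ^ (2 * t) = 1 := by
    have hlam2t1 : lam ^ (2 * t + 1) = lam := by
      have : lam ^ (2 * t + 1) = (lam ^ 2) ^ t * lam := by ring
      rw [this, hlam2, one_pow, one_mul]
    have s3 : (0 : k) = 0 ∧ (lam * mu ^ (2 * t) - 1) = 0 ∧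
        (c * (lam * mu ^ (2 * t) - 1)) = 0 := by
      apply aux_three_coeffs _ _ _ 1 (2 * t + 1) (by omega) (by omega)
      intro y
      have := hF 1 y 1
      simp only [mul_one, one_pow, mul_pow, hlam4t, step2, hlam2t1] at this
      linear_combination this - y ^ 2 * hv1
    linear_combination s3.2.1
  refine ⟨⟨hlam2, step3, hlam4t, step2⟩, ?_⟩
  -- Step 4
  haveI : NeZero (4 * t) := ⟨h4t⟩
  obtain ⟨s, hs, hzs⟩ := hζ.eq_pow_of_pow_eq_one step2
  have hz2t : ζ ^ (2 * t) = -1 := by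
    have hsq : (ζ ^ (2 * t)) ^ 2 = 1 := by
      rw [← pow_mul]
      have : 2 * t * 2 = 4 * t := by omega
      rw [this, hζ.pow_eq_one]
    have hne : ζ ^ (2 * t) ≠ 1 := hζ.pow_ne_one_of_pos_of_lt (by omega) (by omega)
    have h0 : (ζ ^ (2 * t) - 1) * (ζ ^ (2 * t) + 1) = 0 := by linear_combination hsq
    rcases mul_eq_zero.mp h0 with h | h
    · exact absurd (by linear_combination h) hne
    · linear_combination h
  refine ⟨s, ?_, hzs.symm⟩
  have hmul : lam = mu ^ (2 * t) := by
    have : lam = lam ^ 2 * mu ^ (2 * t) := by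
      rw [pow_two, mul_assoc, step3, mul_one]
    rwa [hlam2, one_mul] at this
  rw [hmul, ← hzs, ← pow_mul, mul_comm s (2*t), pow_mul, hz2t]
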